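/- Let α ∈ ℝ, let X be a compact topological space equipped with a finite Borel measure λ, let I ⊆ ℝ be an open interval, and let f : I × X → (0,∞) be continuous such that ∂_t f and ∂_t² f exist and are continuous on I × X. If f(t,x) ∂_t²f(t,x) = ((1+α)/2) (∂_t f(t,x))² for all (t,x) ∈ I × X, then the α-Fisher–Rao energy E(t) = ∫_X f(t,x)^{−α−1} (∂_t f(t,x))² dλ(x) is constant in t on I. -/

import Mathlib

open MeasureTheory

/-- Conservation of the α-Fisher–Rao energy along α-geodesics. If `f > 0` is
continuous on `I × X` (`X` compact with a finite Borel measure `lam`) with continuous first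
and second time derivatives `ft`, `ftt`, and satisfies the pointwise geodesic equation
`f ∂_t²f = ((1+α)/2) (∂_t f)²`, then the energy
`E(t) = ∫ f(t,x)^(−α−1) (∂_t f(t,x))² dlam` is constant in `t` on `I`. -/
theorem stmt5 (α : ℝ) {X : Type*} [TopologicalSpace X] [CompactSpace X]
    [MeasurableSpace X] [BorelSpace X]
    (lam : Measure X) [IsFiniteMeasure lam]
    (I : Set ℝ) (hIo : IsOpen I) (hIc : I.OrdConnected)
    (f ft ftt : ℝ → X → ℝ)
    (hfpos : ∀ t ∈ I, ∀ x : X, 0 < f t x)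
    (hft : ∀ x : X, ∀ t ∈ I, HasDerivAt (fun s => f s x) (ft t x) t)
    (hftt : ∀ x : X, ∀ t ∈ I, HasDerivAt (fun s => ft s x) (ftt t x) t)
    (hfc : ContinuousOn (fun q : ℝ × X => f q.1 q.2) (I ×ˢ Set.univ))
    (hftc : ContinuousOn (fun q : ℝ × X => ft q.1 q.2) (I ×ˢ Set.univ))
    (hfttc : ContinuousOn (fun q : ℝ × X => ftt q.1 q.2) (I ×ˢ Set.univ))
    (hpde : ∀ t ∈ I, ∀ x : X, f t x * ftt t x = ((1 + α) / 2) * (ft t x) ^ 2) :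
    ∀ s ∈ I, ∀ t ∈ I,
      ∫ x, (f t x) ^ (-α - 1 : ℝ) * (ft t x) ^ 2 ∂lam
        = ∫ x, (f s x) ^ (-α - 1 : ℝ) * (ft s x) ^ 2 ∂lam := by
  intro s hs t ht
  have hconv : Convex ℝ I := convex_iff_ordConnected.mpr hIc
  -- pointwise constancy
  have key : ∀ x : X, (f t x) ^ (-α - 1 : ℝ) * (ft t x) ^ 2
      = (f s x) ^ (-α - 1 : ℝ) * (ft s x) ^ 2 := by
    intro x
    set p : ℝ := -α - 1 with hp
    set g : ℝ → ℝ := fun u => (f u x) ^ p * (ft u x) ^ 2 with hg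
    have hderiv : ∀ u ∈ I, HasDerivAt g 0 u := by
      intro u hu
      have hfu := hfpos u hu x
      have h1 : HasDerivAt (fun v => (f v x) ^ p)
          (ft u x * p * (f u x) ^ (p - 1)) u :=
        (hft x u hu).rpow_const (Or.inl hfu.ne')
      have h2 : HasDerivAt (fun v => (ft v x) ^ 2)
          (2 * ft u x * ftt u x) u := by
        simpa [mul_comm, mul_assoc, mul_left_comm, Pi.pow_def] using
          ((hftt x u hu).pow 2)
      have h3 := h1.mul h2
      have hval : ft u x * p * (f u x) ^ (p - 1) * (ft u x) ^ 2
          + (f u x) ^ p * (2 * ft u x * ftt u x) = 0 := by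
        have hfp : (f u x) ^ p = (f u x) ^ (p - 1) * f u x := by
          rw [← Real.rpow_add_one hfu.ne']; ring_nf
        have hpde' := hpde u hu x
        rw [hfp, hp]
        linear_combination (2 * ft u x * (f u x) ^ (-α - 1 - 1 : ℝ)) * hpde'
      simpa [hg, hval, Pi.mul_def] using h3
    have hdiff : DifferentiableOn ℝ g I := fun u hu =>
      ((hderiv u hu).differentiableAt).differentiableWithinAt
    have hfd : ∀ u ∈ I, fderivWithin ℝ g I u = 0 := by
      intro u hu
      have := ((hderiv u hu).hasFDerivAt).hasFDerivWithinAt.fderivWithin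
        (hIo.uniqueDiffOn u hu)
      rw [this]; ext y; simp
    exact hconv.is_const_of_fderivWithin_eq_zero hdiff hfd ht hs
  exact integral_congr_ae (Filter.Eventually.of_forall key)
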